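/- arXiv:2101.09867 — 3 statements merged into one kernel-verified Lean document; each statement's English description precedes it below -/
import Mathlib

section
/- Let M : [0,∞) → ℝ be continuous and let η ∈ ℝ. Then there exists a unique continuously differentiable function w : [0,∞) → ℝ such that w(0) = 1 and w′(t) + η w(t) + ∫_0^t M(t-s) w(s) ds = 0 for all t ≥ 0. -/
open Set MeasureTheory

/-- Convolution on `[0,∞)` (via signed interval integral): `(f*g)(t) = ∫_0^t f(t-s) g(s) ds`. -/
noncomputable def conv (f g : ℝ → ℝ) : ℝ → ℝ :=
  fun t => ∫ s in (0:ℝ)..t, f (t - s) * g s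

/-- `j`-fold convolution power of `M`, with the conventions `M^{*0} = 0` and `M^{*1} = M`. -/
noncomputable def convPow (M : ℝ → ℝ) : ℕ → ℝ → ℝ
  | 0 => fun _ => 0
  | 1 => M
  | (j+2) => conv M (convPow M (j+1))

/-- The norm `‖f‖_{C^k([0,t])} = ∑_{l=0}^k max_{0 ≤ τ ≤ t} |f^{(l)}(τ)|`,
derivatives taken within `[0,∞)`. -/
noncomputable def CkNorm (k : ℕ) (t : ℝ) (f : ℝ → ℝ) : ℝ :=
  ∑ l ∈ Finset.range (k+1), ⨆ τ : Set.Icc (0:ℝ) t, |iteratedDerivWithin l f (Set.Ici 0) τ|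

/-- `w` is a `C¹` solution on `[0,∞)` of the memory ODE
`w′(t) + η w(t) + ∫_0^t M(t-s) w(s) ds = 0` with `w(0) = 1`
(the derivative at `0` being taken within `[0,∞)`). -/
noncomputable def IsMemorySol (M : ℝ → ℝ) (η : ℝ) (w : ℝ → ℝ) : Prop :=
  ContDiffOn ℝ 1 w (Set.Ici 0) ∧ w 0 = 1 ∧
    ∀ t : ℝ, 0 ≤ t →
      derivWithin w (Set.Ici 0) t + η * w t + (∫ s in (0:ℝ)..t, M (t - s) * w s) = 0

open intervalIntegral Filter

section Core
variable (Mc : ℝ → ℝ) (η : ℝ)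

noncomputable def Afun (e : ℝ → ℝ) : ℝ → ℝ :=
  fun t => η * e t + ∫ u in (0:ℝ)..t, Mc (t - u) * e u

noncomputable def Gfun (e : ℝ → ℝ) : ℝ → ℝ :=
  fun t => -∫ s in (0:ℝ)..t, Afun Mc η e s

noncomputable def Phi (e : ℝ → ℝ) : ℝ → ℝ := fun t => 1 + Gfun Mc η e t

variable {Mc η}

lemma contA (hMc : Continuous Mc) {e : ℝ → ℝ} (he : Continuous e) :
    Continuous (Afun Mc η e) := by
  have h1 : Continuous (Function.uncurry fun t u => Mc (t - u) * e u) := by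
    exact (hMc.comp (continuous_fst.sub continuous_snd)).mul (he.comp continuous_snd)
  exact (continuous_const.mul he).add
    (continuous_parametric_intervalIntegral_of_continuous h1 continuous_id)

lemma contG (hMc : Continuous Mc) {e : ℝ → ℝ} (he : Continuous e) :
    Continuous (Gfun Mc η e) := by
  have h1 : Continuous (Function.uncurry fun (_ : ℝ) s => Afun Mc η e s) :=
    (contA hMc he).comp continuous_snd
  exact (continuous_parametric_intervalIntegral_of_continuous h1 continuous_id).neg

lemma contPhi (hMc : Continuous Mc) {e : ℝ → ℝ} (he : Continuous e) :
    Continuous (Phi Mc η e) :=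
  continuous_const.add (contG hMc he)

lemma A_congr {e₁ e₂ : ℝ → ℝ} {t : ℝ} (ht : 0 ≤ t) (h : ∀ s ∈ Icc (0:ℝ) t, e₁ s = e₂ s) :
    Afun Mc η e₁ t = Afun Mc η e₂ t := by
  unfold Afun
  rw [h t ⟨ht, le_rfl⟩, intervalIntegral.integral_congr (g := fun u => Mc (t - u) * e₂ u) ?_]
  intro u hu
  rw [uIcc_of_le ht] at hu
  simp only [h u hu]

lemma G_congr {e₁ e₂ : ℝ → ℝ} {t : ℝ} (ht : 0 ≤ t) (h : ∀ s ∈ Icc (0:ℝ) t, e₁ s = e₂ s) :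
    Gfun Mc η e₁ t = Gfun Mc η e₂ t := by
  unfold Gfun
  congr 1
  apply intervalIntegral.integral_congr
  intro s hs
  rw [uIcc_of_le ht] at hs
  exact A_congr hs.1 fun u hu => h u ⟨hu.1, hu.2.trans hs.2⟩

lemma Phi_congr {e₁ e₂ : ℝ → ℝ} {t : ℝ} (ht : 0 ≤ t) (h : ∀ s ∈ Icc (0:ℝ) t, e₁ s = e₂ s) :
    Phi Mc η e₁ t = Phi Mc η e₂ t := by
  unfold Phi; rw [G_congr ht h]

lemma A_sub (hMc : Continuous Mc) {e₁ e₂ : ℝ → ℝ} (h₁ : Continuous e₁) (h₂ : Continuous e₂)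
    (t : ℝ) : Afun Mc η (fun s => e₁ s - e₂ s) t = Afun Mc η e₁ t - Afun Mc η e₂ t := by
  unfold Afun
  have key : (fun u => Mc (t - u) * (e₁ u - e₂ u))
      = fun u => Mc (t - u) * e₁ u - Mc (t - u) * e₂ u := by funext u; ring
  have i₁ : IntervalIntegrable (fun u => Mc (t - u) * e₁ u) volume 0 t :=
    Continuous.intervalIntegrable (by fun_prop) 0 t
  have i₂ : IntervalIntegrable (fun u => Mc (t - u) * e₂ u) volume 0 t :=
    Continuous.intervalIntegrable (by fun_prop) 0 t
  rw [key, intervalIntegral.integral_sub i₁ i₂]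
  ring

lemma G_sub (hMc : Continuous Mc) {e₁ e₂ : ℝ → ℝ} (h₁ : Continuous e₁) (h₂ : Continuous e₂)
    (t : ℝ) : Gfun Mc η (fun s => e₁ s - e₂ s) t = Gfun Mc η e₁ t - Gfun Mc η e₂ t := by
  unfold Gfun
  have key : (fun s => Afun Mc η (fun u => e₁ u - e₂ u) s)
      = fun s => Afun Mc η e₁ s - Afun Mc η e₂ s := by
    funext s; exact A_sub hMc h₁ h₂ s
  rw [intervalIntegral.integral_congr (g := fun s => Afun Mc η e₁ s - Afun Mc η e₂ s)
      (fun s _ => congrFun key s),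
    intervalIntegral.integral_sub ((contA hMc h₁).intervalIntegrable 0 t)
      ((contA hMc h₂).intervalIntegrable 0 t)]
  ring

lemma step_bound (hMc : Continuous Mc) {T C B : ℝ} (hT : 0 ≤ T)
    (hC : ∀ u ∈ Icc (0:ℝ) T, |Mc u| ≤ C) (hC0 : 0 ≤ C) (hB : 0 ≤ B)
    {e : ℝ → ℝ} (he : Continuous e) {n : ℕ}
    (hbd : ∀ s ∈ Icc (0:ℝ) T, |e s| ≤ B * ((|η| + C * T) ^ n * s ^ n / n.factorial))
    {t : ℝ} (ht : t ∈ Icc (0:ℝ) T) :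
    |Gfun Mc η e t| ≤ B * ((|η| + C * T) ^ (n + 1) * t ^ (n + 1) / (n + 1).factorial) := by
  set L := |η| + C * T with hL
  have hL0 : 0 ≤ L := by positivity
  have ht0 := ht.1
  have hA : ∀ s ∈ Icc (0:ℝ) t, |Afun Mc η e s| ≤ B * L ^ (n + 1) / n.factorial * s ^ n := by
    intro s hs
    have hs0 := hs.1
    have hsT : s ∈ Icc (0:ℝ) T := ⟨hs0, hs.2.trans ht.2⟩
    have h1 : |η * e s| ≤ |η| * (B * (L ^ n * s ^ n / n.factorial)) := by
      rw [abs_mul]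
      exact mul_le_mul_of_nonneg_left (hbd s hsT) (abs_nonneg η)
    have h2 : |∫ u in (0:ℝ)..s, Mc (s - u) * e u|
        ≤ C * T * (B * (L ^ n * s ^ n / n.factorial)) := by
      have e1 : |∫ u in (0:ℝ)..s, Mc (s - u) * e u| ≤ ∫ u in (0:ℝ)..s, |Mc (s - u) * e u| :=
        intervalIntegral.abs_integral_le_integral_abs hs0
      have e2 : ∫ u in (0:ℝ)..s, |Mc (s - u) * e u|
          ≤ ∫ u in (0:ℝ)..s, C * B * L ^ n / n.factorial * u ^ n := by
        apply intervalIntegral.integral_mono_on hs0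
        · exact (((hMc.comp (continuous_const.sub continuous_id)).mul he).abs).intervalIntegrable 0 s
        · exact ((continuous_const.mul (continuous_pow n))).intervalIntegrable 0 s
        · intro u hu
          have hu0 := hu.1
          have hsu : s - u ∈ Icc (0:ℝ) T := ⟨by linarith [hu.2], by linarith [hsT.2, hu.1]⟩
          rw [abs_mul]
          have := hbd u ⟨hu0, hu.2.trans hsT.2⟩
          calc |Mc (s - u)| * |e u| ≤ C * (B * (L ^ n * u ^ n / n.factorial)) :=
                mul_le_mul (hC _ hsu) this (abs_nonneg _) hC0
            _ = C * B * L ^ n / n.factorial * u ^ n := by ring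
      have e3 : ∫ u in (0:ℝ)..s, C * B * L ^ n / n.factorial * u ^ n
          = C * B * L ^ n / n.factorial * (s ^ (n + 1) / (n + 1)) := by
        rw [intervalIntegral.integral_const_mul, integral_pow]
        norm_num
      have e4 : C * B * L ^ n / n.factorial * (s ^ (n + 1) / (n + 1))
          ≤ C * T * (B * (L ^ n * s ^ n / n.factorial)) := by
        have hpow : s ^ (n + 1) / (n + 1) ≤ T * s ^ n := by
          have h5 : s ^ (n + 1) ≤ T * s ^ n := by
            rw [pow_succ]
            calc s ^ n * s ≤ s ^ n * T := by
                  exact mul_le_mul_of_nonneg_left hsT.2 (pow_nonneg hs0 n)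
              _ = T * s ^ n := by ring
          have h6 : s ^ (n + 1) / (n + 1) ≤ s ^ (n + 1) := by
            apply div_le_self (pow_nonneg hs0 _)
            exact_mod_cast Nat.one_le_iff_ne_zero.2 (Nat.succ_ne_zero n)
          linarith
        calc C * B * L ^ n / n.factorial * (s ^ (n + 1) / (n + 1))
            ≤ C * B * L ^ n / n.factorial * (T * s ^ n) := by
              apply mul_le_mul_of_nonneg_left hpow
              positivity
          _ = C * T * (B * (L ^ n * s ^ n / n.factorial)) := by ring
      linarith
    calc |Afun Mc η e s| ≤ |η * e s| + |∫ u in (0:ℝ)..s, Mc (s - u) * e u| := abs_add_le _ _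
      _ ≤ (|η| + C * T) * (B * (L ^ n * s ^ n / n.factorial)) := by linarith
      _ = B * L ^ (n + 1) / n.factorial * s ^ n := by rw [← hL]; ring
  have hG : |Gfun Mc η e t| ≤ ∫ s in (0:ℝ)..t, B * L ^ (n + 1) / n.factorial * s ^ n := by
    calc |Gfun Mc η e t| = |∫ s in (0:ℝ)..t, Afun Mc η e s| := by unfold Gfun; rw [abs_neg]
      _ ≤ ∫ s in (0:ℝ)..t, |Afun Mc η e s| := intervalIntegral.abs_integral_le_integral_abs ht0
      _ ≤ ∫ s in (0:ℝ)..t, B * L ^ (n + 1) / n.factorial * s ^ n := by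
          apply intervalIntegral.integral_mono_on ht0
          · exact ((contA hMc he).abs).intervalIntegrable 0 t
          · exact ((continuous_const.mul (continuous_pow n))).intervalIntegrable 0 t
          · exact hA
  have e5 : ∫ s in (0:ℝ)..t, B * L ^ (n + 1) / n.factorial * s ^ n
      = B * L ^ (n + 1) / n.factorial * (t ^ (n + 1) / (n + 1)) := by
    rw [intervalIntegral.integral_const_mul, integral_pow]
    norm_num
  have e6 : B * L ^ (n + 1) / n.factorial * (t ^ (n + 1) / (n + 1))
      = B * (L ^ (n + 1) * t ^ (n + 1) / (n + 1).factorial) := by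
    rw [Nat.factorial_succ]
    push_cast
    field_simp
  rw [e5, e6] at hG
  exact hG

end Core

section Main
variable {Mc : ℝ → ℝ} {η : ℝ}

lemma uniq_int (hMc : Continuous Mc) {T : ℝ} (hT : 0 ≤ T) {e₁ e₂ : ℝ → ℝ}
    (h₁ : Continuous e₁) (h₂ : Continuous e₂)
    (hf₁ : ∀ t ∈ Icc (0:ℝ) T, e₁ t = Phi Mc η e₁ t)
    (hf₂ : ∀ t ∈ Icc (0:ℝ) T, e₂ t = Phi Mc η e₂ t) :
    ∀ t ∈ Icc (0:ℝ) T, e₁ t = e₂ t := by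
  obtain ⟨C₀, hC₀⟩ := isCompact_Icc.exists_bound_of_continuousOn
    (hMc.continuousOn : ContinuousOn Mc (Icc (0:ℝ) T))
  set C := max C₀ 0 with hCdef
  have hC : ∀ u ∈ Icc (0:ℝ) T, |Mc u| ≤ C := fun u hu =>
    (hC₀ u hu).trans (le_max_left _ _)
  have hC0 : 0 ≤ C := le_max_right _ _
  set d : ℝ → ℝ := fun s => e₁ s - e₂ s with hd
  have hdc : Continuous d := h₁.sub h₂
  obtain ⟨B₀, hB₀⟩ := isCompact_Icc.exists_bound_of_continuousOn
    (hdc.continuousOn : ContinuousOn d (Icc (0:ℝ) T))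
  set B := max B₀ 0 with hBdef
  have hB : ∀ s ∈ Icc (0:ℝ) T, |d s| ≤ B := fun s hs =>
    (hB₀ s hs).trans (le_max_left _ _)
  have hB0 : (0:ℝ) ≤ B := le_max_right _ _
  set L := |η| + C * T with hL
  have hL0 : 0 ≤ L := by positivity
  have hfix : ∀ t ∈ Icc (0:ℝ) T, d t = Gfun Mc η d t := by
    intro t ht
    have : d t = Phi Mc η e₁ t - Phi Mc η e₂ t := by
      show e₁ t - e₂ t = _
      rw [hf₁ t ht, hf₂ t ht]
    rw [this]
    unfold Phi
    rw [G_sub hMc h₁ h₂ t]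
    ring
  have claim : ∀ n : ℕ, ∀ t ∈ Icc (0:ℝ) T, |d t| ≤ B * (L ^ n * t ^ n / n.factorial) := by
    intro n
    induction n with
    | zero => intro t ht; simpa using hB t ht
    | succ n ih =>
      intro t ht
      rw [hfix t ht]
      exact step_bound hMc hT hC hC0 hB0 hdc ih ht
  intro t ht
  have hlim : Filter.Tendsto (fun n : ℕ => B * ((L * T) ^ n / n.factorial))
      Filter.atTop (nhds (B * 0)) :=
    (FloorSemiring.tendsto_pow_div_factorial_atTop (L * T)).const_mul B
  rw [mul_zero] at hlim
  have hle : ∀ n : ℕ, |d t| ≤ B * ((L * T) ^ n / n.factorial) := by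
    intro n
    refine (claim n t ht).trans ?_
    rw [mul_pow]
    gcongr <;> first | exact hB0 | exact hL0 | exact ht.1 | exact ht.2
  have h0 : |d t| ≤ 0 := ge_of_tendsto' hlim hle
  exact sub_eq_zero.mp (abs_nonpos_iff.mp h0)


lemma exist_int (hMc : Continuous Mc) (η : ℝ) {T : ℝ} (hT : 0 ≤ T) :
    ∃ e : ℝ → ℝ, Continuous e ∧ ∀ t ∈ Icc (0:ℝ) T, e t = Phi Mc η e t := by
  obtain ⟨C₀, hC₀⟩ := isCompact_Icc.exists_bound_of_continuousOn
    (hMc.continuousOn : ContinuousOn Mc (Icc (0:ℝ) T))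
  set C := max C₀ 0 with hCdef
  have hC : ∀ u ∈ Icc (0:ℝ) T, |Mc u| ≤ C := fun u hu => (hC₀ u hu).trans (le_max_left _ _)
  have hC0 : 0 ≤ C := le_max_right _ _
  set L := |η| + C * T with hL
  have hL0 : 0 ≤ L := by positivity
  obtain ⟨n, hn⟩ : ∃ n : ℕ, (L * T) ^ n / n.factorial < 1 :=
    ((FloorSemiring.tendsto_pow_div_factorial_atTop (L * T)).eventually_lt_const
      one_pos).exists
  haveI : Nonempty (Icc (0:ℝ) T) := ⟨⟨0, le_rfl, hT⟩⟩
  set X := C(Icc (0:ℝ) T, ℝ)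
  let ext : X → ℝ → ℝ := fun f s => f (projIcc 0 T hT s)
  have hext : ∀ f : X, Continuous (ext f) := fun f => f.continuous.comp continuous_projIcc
  let F : X → X := fun f =>
    ⟨fun t => Phi Mc η (ext f) ↑t, (contPhi hMc (hext f)).comp continuous_subtype_val⟩
  have extmem : ∀ (f : X) (s : ℝ) (hs : s ∈ Icc (0:ℝ) T), ext f s = f ⟨s, hs⟩ := by
    intro f s hs
    simp only [ext, projIcc_of_mem hT hs]
  -- continuity of Phi-iterates
  have contIter : ∀ (k : ℕ) (w : ℝ → ℝ), Continuous w → Continuous ((Phi Mc η)^[k] w) := by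
    intro k
    induction k with
    | zero => intro w hw; exact hw
    | succ k ih =>
      intro w hw
      rw [Function.iterate_succ_apply']
      exact contPhi hMc (ih w hw)
  have contGIter : ∀ (k : ℕ) (w : ℝ → ℝ), Continuous w → Continuous ((Gfun Mc η)^[k] w) := by
    intro k
    induction k with
    | zero => intro w hw; exact hw
    | succ k ih =>
      intro w hw
      rw [Function.iterate_succ_apply']
      exact contG hMc (ih w hw)
  -- iterates of F agree with iterates of Phi
  have claim1 : ∀ (k : ℕ) (f : X) (t : Icc (0:ℝ) T),
      (F^[k] f) t = (Phi Mc η)^[k] (ext f) ↑t := by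
    intro k
    induction k with
    | zero =>
      intro f t
      simp only [Function.iterate_zero, id_eq]
      rw [extmem f ↑t t.2]
    | succ k ih =>
      intro f t
      rw [Function.iterate_succ_apply', Function.iterate_succ_apply']
      show Phi Mc η (ext (F^[k] f)) ↑t = Phi Mc η ((Phi Mc η)^[k] (ext f)) ↑t
      apply Phi_congr t.2.1
      intro s hs
      have hsT : s ∈ Icc (0:ℝ) T := ⟨hs.1, hs.2.trans t.2.2⟩
      rw [extmem _ s hsT]
      exact ih f ⟨s, hsT⟩
  -- difference of Phi-iterates is G-iterate of difference
  have claim2 : ∀ (k : ℕ) (w₁ w₂ : ℝ → ℝ), Continuous w₁ → Continuous w₂ →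
      (fun s => (Phi Mc η)^[k] w₁ s - (Phi Mc η)^[k] w₂ s)
        = (Gfun Mc η)^[k] (fun s => w₁ s - w₂ s) := by
    intro k
    induction k with
    | zero => intro w₁ w₂ _ _; rfl
    | succ k ih =>
      intro w₁ w₂ hw₁ hw₂
      funext t
      rw [Function.iterate_succ_apply', Function.iterate_succ_apply']
      have e1 : Phi Mc η ((Phi Mc η)^[k] w₁) t - Phi Mc η ((Phi Mc η)^[k] w₂) t
          = Gfun Mc η (fun s => (Phi Mc η)^[k] w₁ s - (Phi Mc η)^[k] w₂ s) t := by
        rw [G_sub hMc (contIter k w₁ hw₁) (contIter k w₂ hw₂)]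
        unfold Phi
        ring
      rw [e1, ih w₁ w₂ hw₁ hw₂, ← Function.iterate_succ_apply' (Gfun Mc η), Function.iterate_succ_apply']
  -- bound on G-iterates
  have claim3 : ∀ (k : ℕ) (d : ℝ → ℝ), Continuous d → ∀ B : ℝ, 0 ≤ B →
      (∀ s ∈ Icc (0:ℝ) T, |d s| ≤ B) → ∀ t ∈ Icc (0:ℝ) T,
      |(Gfun Mc η)^[k] d t| ≤ B * (L ^ k * t ^ k / k.factorial) := by
    intro k
    induction k with
    | zero =>
      intro d _ B _ hB t ht
      simpa using hB t ht
    | succ k ih =>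
      intro d hd B hB0 hB t ht
      rw [Function.iterate_succ_apply']
      exact step_bound hMc hT hC hC0 hB0 (contGIter k d hd) (ih d hd B hB0 hB) ht
  -- Lipschitz bound for F^[n]
  have hq0 : 0 ≤ L ^ n * T ^ n / n.factorial := by positivity
  have hlip : ∀ f g : X, dist (F^[n] f) (F^[n] g) ≤ L ^ n * T ^ n / n.factorial * dist f g := by
    intro f g
    rw [ContinuousMap.dist_le (by positivity)]
    intro t
    have hdist : ∀ s ∈ Icc (0:ℝ) T, |ext f s - ext g s| ≤ dist f g := by
      intro s hs
      rw [extmem f s hs, extmem g s hs, ← Real.dist_eq]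
      exact ContinuousMap.dist_apply_le_dist _
    have := claim3 n (fun s => ext f s - ext g s) ((hext f).sub (hext g)) (dist f g)
      dist_nonneg hdist ↑t t.2
    rw [← claim2 n (ext f) (ext g) (hext f) (hext g)] at this
    rw [Real.dist_eq, claim1 n f t, claim1 n g t]
    refine this.trans ?_
    have htn : (t:ℝ) ^ n ≤ T ^ n := pow_le_pow_left₀ t.2.1 t.2.2 n
    calc dist f g * (L ^ n * ↑t ^ n / ↑n.factorial)
        ≤ dist f g * (L ^ n * T ^ n / ↑n.factorial) := by gcongr
      _ = L ^ n * T ^ n / ↑n.factorial * dist f g := by ring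
  set q : NNReal := Real.toNNReal (L ^ n * T ^ n / n.factorial) with hqdef
  have hq1 : q < 1 := by
    have hq' : (q:ℝ) < 1 := by
      rw [hqdef, Real.coe_toNNReal _ hq0, ← mul_pow]
      exact hn
    exact_mod_cast hq'
  have hcontract : ContractingWith q (F^[n]) := by
    constructor
    · exact hq1
    · apply LipschitzWith.of_dist_le_mul
      intro f g
      rw [hqdef, Real.coe_toNNReal _ hq0]
      exact hlip f g
  set x := ContractingWith.fixedPoint (F^[n]) hcontract with hx
  have hfixn : F^[n] x = x := hcontract.fixedPoint_isFixedPt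
  have hfix : F x = x := hcontract.isFixedPt_fixedPoint_iterate
  refine ⟨ext x, hext x, ?_⟩
  intro t ht
  rw [extmem x t ht]
  conv_lhs => rw [← hfix]
  show Phi Mc η (ext x) t = Phi Mc η (ext x) t
  rfl



lemma exists_sol (hMc : Continuous Mc) (η : ℝ) :
    ∃ w : ℝ → ℝ, Continuous w ∧ ∀ t, 0 ≤ t → w t = Phi Mc η w t := by
  have h : ∀ n : ℕ, ∃ e : ℝ → ℝ, Continuous e ∧
      ∀ t ∈ Icc (0:ℝ) ((n:ℝ) + 1), e t = Phi Mc η e t :=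
    fun n => exist_int hMc η (by positivity)
  choose sol hcont hsol using h
  have consist : ∀ m n : ℕ, ∀ t, t ∈ Icc (0:ℝ) ((m:ℝ) + 1) → t ∈ Icc (0:ℝ) ((n:ℝ) + 1) →
      sol m t = sol n t := by
    intro m n t htm htn
    have hmin : (0:ℝ) ≤ min ((m:ℝ) + 1) ((n:ℝ) + 1) := le_min (by positivity) (by positivity)
    refine uniq_int (η := η) hMc hmin (hcont m) (hcont n) ?_ ?_ t ⟨htm.1, le_min htm.2 htn.2⟩
    · exact fun s hs => hsol m s ⟨hs.1, hs.2.trans (min_le_left _ _)⟩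
    · exact fun s hs => hsol n s ⟨hs.1, hs.2.trans (min_le_right _ _)⟩
  set W : ℝ → ℝ := fun t => sol ⌊max t 0⌋₊ (max t 0) with hW
  have key : ∀ n : ℕ, ∀ t ∈ Icc (0:ℝ) ((n:ℝ) + 1), W t = sol n t := by
    intro n t ht
    have hmax : max t 0 = t := max_eq_left ht.1
    show sol ⌊max t 0⌋₊ (max t 0) = sol n t
    rw [hmax]
    exact consist _ n t ⟨ht.1, (Nat.lt_floor_add_one t).le⟩ ht
  have hWc : Continuous W := by
    rw [continuous_iff_continuousAt]
    intro t₀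
    set n : ℕ := ⌊max t₀ 0⌋₊ with hn
    have ht₀ : t₀ < (n:ℝ) + 1 :=
      lt_of_le_of_lt (le_max_left t₀ 0) (Nat.lt_floor_add_one _)
    have hg : Continuous fun t => sol n (max t 0) :=
      (hcont n).comp (continuous_id.max continuous_const)
    have hev : W =ᶠ[nhds t₀] fun t => sol n (max t 0) := by
      filter_upwards [IsOpen.mem_nhds isOpen_Iio (show t₀ ∈ Iio ((n:ℝ) + 1) from ht₀)] with t ht
      have hmem : max t 0 ∈ Icc (0:ℝ) ((n:ℝ) + 1) :=
        ⟨le_max_right _ _, max_le (le_of_lt ht) (by positivity)⟩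
      have := key n (max t 0) hmem
      show sol ⌊max t 0⌋₊ (max t 0) = sol n (max t 0)
      have hmm : max (max t 0) 0 = max t 0 := max_eq_left (le_max_right _ _)
      rw [show sol ⌊max t 0⌋₊ (max t 0) = W (max t 0) by show _ = sol ⌊max (max t 0) 0⌋₊ (max (max t 0) 0); rw [hmm]]
      exact this
    exact hg.continuousAt.congr hev.symm
  refine ⟨W, hWc, ?_⟩
  intro t ht
  set n : ℕ := ⌊t⌋₊ with hn
  have htI : t ∈ Icc (0:ℝ) ((n:ℝ) + 1) := ⟨ht, (Nat.lt_floor_add_one t).le⟩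
  have h1 : W t = sol n t := key n t htI
  have h2 : Phi Mc η W t = Phi Mc η (sol n) t := by
    apply Phi_congr ht
    intro s hs
    exact key n s ⟨hs.1, hs.2.trans htI.2⟩
  rw [h1, h2]
  exact hsol n t htI

lemma int_to_sol {M : ℝ → ℝ} (hMc : Continuous Mc) (hMM : ∀ t, 0 ≤ t → Mc t = M t)
    {w : ℝ → ℝ} (hw : Continuous w) (hint : ∀ t, 0 ≤ t → w t = Phi Mc η w t) :
    IsMemorySol M η w := by
  set h : ℝ → ℝ := Afun Mc η w with hh
  have hc : Continuous h := contA hMc hw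
  have hF : ∀ t : ℝ, HasDerivAt (Phi Mc η w) (-(h t)) t := by
    intro t
    have h1 : HasDerivAt (fun u => ∫ s in (0:ℝ)..u, h s) (h t) t :=
      intervalIntegral.integral_hasDerivAt_right (hc.intervalIntegrable 0 t)
        (hc.stronglyMeasurableAtFilter volume (nhds t)) hc.continuousAt
    have h2 : HasDerivAt (fun u => 1 + -∫ s in (0:ℝ)..u, h s) (-(h t)) t := by
      simpa using (h1.neg.const_add 1)
    exact h2
  have hC1 : ContDiff ℝ 1 (Phi Mc η w) := by
    rw [contDiff_one_iff_deriv]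
    constructor
    · exact fun t => (hF t).differentiableAt
    · have : deriv (Phi Mc η w) = fun t => -(h t) := funext fun t => (hF t).deriv
      rw [this]
      exact hc.neg
  have hPhi0 : Phi Mc η w 0 = 1 := by
    unfold Phi Gfun
    simp
  refine ⟨?_, ?_, ?_⟩
  · exact (hC1.contDiffOn).congr fun t ht => hint t ht
  · rw [hint 0 le_rfl, hPhi0]
  · intro t ht
    have hdw : HasDerivWithinAt w (-(h t)) (Ici 0) t :=
      ((hF t).hasDerivWithinAt).congr (fun s hs => hint s hs) (hint t ht)
    have hder : derivWithin w (Ici 0) t = -(h t) :=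
      hdw.derivWithin (uniqueDiffOn_Ici 0 t ht)
    have hMeq : ∫ s in (0:ℝ)..t, M (t - s) * w s = ∫ s in (0:ℝ)..t, Mc (t - s) * w s := by
      apply intervalIntegral.integral_congr
      intro s hs
      rw [uIcc_of_le ht] at hs
      show M (t - s) * w s = Mc (t - s) * w s
      rw [hMM (t - s) (by linarith [hs.2])]
    rw [hder, hMeq]
    have : h t = η * w t + ∫ s in (0:ℝ)..t, Mc (t - s) * w s := rfl
    rw [this]
    ring

lemma sol_to_int {M : ℝ → ℝ} (hMc : Continuous Mc) (hMM : ∀ t, 0 ≤ t → Mc t = M t)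
    {w : ℝ → ℝ} (hw : IsMemorySol M η w) :
    Continuous (fun t => w (max t 0)) ∧
      ∀ t, 0 ≤ t → w (max t 0) = Phi Mc η (fun s => w (max s 0)) t := by
  obtain ⟨hreg, hw0, hode⟩ := hw
  have hwc : ContinuousOn w (Ici 0) := hreg.continuousOn
  set wb : ℝ → ℝ := fun t => w (max t 0) with hwb
  have hwbc : Continuous wb :=
    hwc.comp_continuous (continuous_id.max continuous_const) fun x => mem_Ici.mpr (le_max_right _ _)
  have hwbw : ∀ s : ℝ, 0 ≤ s → wb s = w s := fun s hs => by
    show w (max s 0) = w s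
    rw [max_eq_left hs]
  have hAc : Continuous (Afun Mc η wb) := contA hMc hwbc
  have hder : ∀ s : ℝ, 0 ≤ s → derivWithin w (Ici 0) s = -(Afun Mc η wb s) := by
    intro s hs
    have h1 := hode s hs
    have h2 : ∫ u in (0:ℝ)..s, M (s - u) * w u = ∫ u in (0:ℝ)..s, Mc (s - u) * wb u := by
      apply intervalIntegral.integral_congr
      intro u hu
      rw [uIcc_of_le hs] at hu
      show M (s - u) * w u = Mc (s - u) * wb u
      rw [hMM (s - u) (by linarith [hu.2]), hwbw u hu.1]
    rw [h2] at h1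
    have h3 : Afun Mc η wb s = η * w s + ∫ u in (0:ℝ)..s, Mc (s - u) * wb u := by
      show η * wb s + _ = _
      rw [hwbw s hs]
    rw [h3]
    linarith
  refine ⟨hwbc, ?_⟩
  intro t ht
  have hftc : ∫ s in (0:ℝ)..t, -(Afun Mc η wb s) = w t - w 0 := by
    apply intervalIntegral.integral_eq_sub_of_hasDeriv_right_of_le ht
      (hwc.mono (Icc_subset_Ici_self)) ?_ ((hAc.neg).intervalIntegrable 0 t)
    intro x hx
    have hx0 : (0:ℝ) < x := hx.1
    have hdx : HasDerivWithinAt w (derivWithin w (Ici 0) x) (Ici 0) x :=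
      ((hreg.differentiableOn one_ne_zero) x (le_of_lt hx0)).hasDerivWithinAt
    have hdx2 : HasDerivAt w (derivWithin w (Ici 0) x) x :=
      hdx.hasDerivAt (Ici_mem_nhds hx0)
    rw [hder x hx0.le] at hdx2
    exact hdx2.hasDerivWithinAt
  rw [intervalIntegral.integral_neg] at hftc
  have : w t = 1 - ∫ s in (0:ℝ)..t, Afun Mc η wb s := by rw [hw0] at hftc; linarith
  show wb t = Phi Mc η wb t
  rw [hwbw t ht, this]
  show _ = 1 + Gfun Mc η wb t
  unfold Gfun
  ring


end Main


/-- For `M` continuous on `[0,∞)` and `η ∈ ℝ`, the memory ODE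
`w′ + η w + ∫_0^t M(t-s) w(s) ds = 0`, `w(0) = 1`, has a `C¹` solution on `[0,∞)`,
and any two such solutions agree on `[0,∞)`. -/
theorem memory_ode_exists_unique
    (M : ℝ → ℝ) (hM : ContinuousOn M (Set.Ici 0)) (η : ℝ) :
    (∃ w : ℝ → ℝ, IsMemorySol M η w) ∧
      ∀ w₁ w₂ : ℝ → ℝ, IsMemorySol M η w₁ → IsMemorySol M η w₂ →
        ∀ t : ℝ, 0 ≤ t → w₁ t = w₂ t := by
  set Mc : ℝ → ℝ := fun t => M (max t 0) with hMcdef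
  have hMc : Continuous Mc :=
    hM.comp_continuous (continuous_id.max continuous_const) fun x => mem_Ici.mpr (le_max_right _ _)
  have hMM : ∀ t, 0 ≤ t → Mc t = M t := by
    intro t ht
    show M (max t 0) = M t
    rw [max_eq_left ht]
  constructor
  · obtain ⟨w, hwc, hweq⟩ := exists_sol hMc η
    exact ⟨w, int_to_sol hMc hMM hwc hweq⟩
  · intro w₁ w₂ h₁ h₂ t ht
    obtain ⟨hc₁, hi₁⟩ := sol_to_int hMc hMM h₁
    obtain ⟨hc₂, hi₂⟩ := sol_to_int hMc hMM h₂
    have := uniq_int hMc ht hc₁ hc₂ (fun s hs => hi₁ s hs.1) (fun s hs => hi₂ s hs.1)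
      t ⟨ht, le_rfl⟩
    calc w₁ t = w₁ (max t 0) := by rw [max_eq_left ht]
      _ = w₂ (max t 0) := this
      _ = w₂ t := by rw [max_eq_left ht]
end

section
/- Let M : [0,∞) → ℝ be continuous, let η ∈ ℝ, and let w_η be the unique C¹ solution on [0,∞) of w′(t) + η w(t) + ∫_0^t M(t-s) w(s) ds = 0 with w(0) = 1. Then for every t ≥ 0, w_η(t) = e^{-η t} + ∫_0^t K_M(t,s) e^{-η s} ds, where K_M(t,s) := ∑_{j=1}^∞ ((-s)^j / j!) M^{*j}(t-s). -/
open Set MeasureTheory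

/-- The flow kernel `K_M(t,s) = ∑_{j≥1} ((-s)^j / j!) M^{*j}(t-s)`. -/
noncomputable def KM (M : ℝ → ℝ) (t s : ℝ) : ℝ :=
  ∑' j : ℕ, ((-s) ^ j / (j.factorial : ℝ)) * convPow M j (t - s)

/-! ### Auxiliary convolution lemmas -/

lemma conv_comm (f g : ℝ → ℝ) : conv f g = conv g f := by
  funext t
  have h := intervalIntegral.integral_comp_sub_left (a := (0:ℝ)) (b := t)
      (fun s => g (t - s) * f s) t
  simp only [sub_sub_cancel, sub_self, sub_zero] at h
  unfold conv
  rw [← h]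
  exact intervalIntegral.integral_congr fun s _ => mul_comm _ _

lemma conv_congr_right {g₁ g₂ : ℝ → ℝ} (f : ℝ → ℝ) {t : ℝ} (ht : 0 ≤ t)
    (h : ∀ s ∈ Icc (0:ℝ) t, g₁ s = g₂ s) : conv f g₁ t = conv f g₂ t := by
  unfold conv
  refine intervalIntegral.integral_congr fun s hs => ?_
  rw [uIcc_of_le ht] at hs
  rw [h s hs]

lemma conv_congr_left {f₁ f₂ : ℝ → ℝ} (g : ℝ → ℝ) {t : ℝ} (ht : 0 ≤ t)
    (h : ∀ s ∈ Icc (0:ℝ) t, f₁ s = f₂ s) : conv f₁ g t = conv f₂ g t := by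
  unfold conv
  refine intervalIntegral.integral_congr fun s hs => ?_
  rw [uIcc_of_le ht] at hs
  rw [h (t - s) ⟨by linarith [hs.2], by linarith [hs.1]⟩]

lemma conv_continuous {f g : ℝ → ℝ} (hf : Continuous f) (hg : Continuous g) :
    Continuous (conv f g) := by
  unfold conv
  exact intervalIntegral.continuous_parametric_intervalIntegral_of_continuous
    (by fun_prop) continuous_id

lemma indicator_intervalIntegrable {h : ℝ → ℝ} (hh : Continuous h) (S : Set ℝ)
    (hS : MeasurableSet S) (a b : ℝ) :
    IntervalIntegrable (Set.indicator S h) MeasureTheory.volume a b := by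
  rw [intervalIntegrable_iff]
  exact (hh.intervalIntegrable a b).def'.indicator hS

lemma integral_indicator_ge {h : ℝ → ℝ} (hh : Continuous h) {s t : ℝ} (hs : s ∈ Icc (0:ℝ) t) :
    ∫ σ in (0:ℝ)..t, Set.indicator {x | s ≤ x} h σ = ∫ σ in s..t, h σ := by
  have key : ∀ σ : ℝ, Set.indicator {x | s ≤ x} h σ
      = h σ - Set.indicator (Iio s) h σ := by
    intro σ
    by_cases hσ : s ≤ σ
    · simp [Set.indicator_apply, hσ, not_lt.mpr hσ]
    · simp [Set.indicator_apply, hσ, lt_of_not_ge hσ]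
  have hne : ∀ᵐ (x : ℝ) ∂MeasureTheory.volume, x ≠ s := by
    refine MeasureTheory.ae_iff.mpr ?_
    simp only [ne_eq, not_not]
    have : {x : ℝ | x = s} = {s} := by ext; simp
    rw [this]
    exact MeasureTheory.measure_singleton s
  have h1 : (∫ σ in (0:ℝ)..t, Set.indicator (Iio s) h σ)
      = ∫ σ in (0:ℝ)..t, Set.indicator {x | x ≤ s} h σ := by
    refine intervalIntegral.integral_congr_ae ?_
    filter_upwards [hne] with x hx _
    have : x < s ↔ x ≤ s := ⟨le_of_lt, fun h' => lt_of_le_of_ne h' hx⟩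
    simp [Set.indicator_apply, Iio, this]
  simp only [key]
  rw [intervalIntegral.integral_sub (hh.intervalIntegrable _ _)
      (indicator_intervalIntegrable hh _ measurableSet_Iio _ _), h1,
    intervalIntegral.integral_indicator hs,
    intervalIntegral.integral_interval_sub_left (hh.intervalIntegrable _ _)
      (hh.intervalIntegrable _ _)]

lemma triangle_swap (F : ℝ → ℝ → ℝ) (hF : Continuous (Function.uncurry F)) {t : ℝ} (ht : 0 ≤ t) :
    (∫ σ in (0:ℝ)..t, ∫ s in (0:ℝ)..σ, F σ s) = ∫ s in (0:ℝ)..t, ∫ σ in s..t, F σ s := by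
  set G : ℝ → ℝ → ℝ := fun σ s => Set.indicator {x | x ≤ σ} (F σ) s with hGdef
  haveI : IsFiniteMeasure (MeasureTheory.volume.restrict (Ioc (0:ℝ) t)) :=
    ⟨by rw [Measure.restrict_apply_univ]; exact measure_Ioc_lt_top⟩
  have hGm : Function.uncurry G =
      Set.indicator {p : ℝ × ℝ | p.2 ≤ p.1} (Function.uncurry F) := by
    funext p
    by_cases hp : p.2 ≤ p.1 <;>
      simp [Function.uncurry, hGdef, Set.indicator_apply, hp]
  have hint : Integrable (Function.uncurry G)
      ((MeasureTheory.volume.restrict (Ioc (0:ℝ) t)).prod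
        (MeasureTheory.volume.restrict (Ioc (0:ℝ) t))) := by
    obtain ⟨B, hB⟩ := ((isCompact_Icc (a := (0:ℝ)) (b := t)).prod
      (isCompact_Icc (a := (0:ℝ)) (b := t))).exists_bound_of_continuousOn hF.continuousOn
    refine MeasureTheory.Integrable.mono' (integrable_const B) ?_ ?_
    · rw [hGm]
      exact hF.aestronglyMeasurable.indicator
        (measurableSet_le measurable_snd measurable_fst)
    · rw [MeasureTheory.Measure.prod_restrict]
      filter_upwards [MeasureTheory.ae_restrict_mem
        (measurableSet_Ioc.prod measurableSet_Ioc)] with p hp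
      have h1 : ‖Function.uncurry G p‖ ≤ ‖Function.uncurry F p‖ := by
        rw [hGm]
        exact norm_indicator_le_norm_self (f := Function.uncurry F)
          (s := {p : ℝ × ℝ | p.2 ≤ p.1}) (a := p)
      exact h1.trans (hB p ⟨Ioc_subset_Icc_self hp.1, Ioc_subset_Icc_self hp.2⟩)
  have hswap : (∫ σ in Ioc (0:ℝ) t, ∫ s in Ioc (0:ℝ) t, G σ s)
      = ∫ s in Ioc (0:ℝ) t, ∫ σ in Ioc (0:ℝ) t, G σ s :=
    MeasureTheory.integral_integral_swap hint
  have step1 : (∫ σ in (0:ℝ)..t, ∫ s in (0:ℝ)..σ, F σ s)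
      = ∫ σ in (0:ℝ)..t, ∫ s in (0:ℝ)..t, G σ s := by
    refine intervalIntegral.integral_congr fun σ hσ => ?_
    rw [uIcc_of_le ht] at hσ
    exact (intervalIntegral.integral_indicator hσ).symm
  have step3 : (∫ s in (0:ℝ)..t, ∫ σ in (0:ℝ)..t, G σ s)
      = ∫ s in (0:ℝ)..t, ∫ σ in s..t, F σ s := by
    refine intervalIntegral.integral_congr fun s hs => ?_
    rw [uIcc_of_le ht] at hs
    have hfun : (fun σ => G σ s) = Set.indicator {x | s ≤ x} (fun σ => F σ s) := by
      funext σ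
      by_cases hp : s ≤ σ <;> simp [hGdef, Set.indicator_apply, hp]
    rw [hfun]
    exact integral_indicator_ge
      (hF.comp (continuous_id.prodMk continuous_const)) hs
  rw [step1, ← step3]
  rw [intervalIntegral.integral_of_le ht, intervalIntegral.integral_of_le ht]
  simp only [intervalIntegral.integral_of_le ht]
  exact hswap

lemma conv_assoc {f g h : ℝ → ℝ} (hf : Continuous f) (hg : Continuous g) (hh : Continuous h)
    {t : ℝ} (ht : 0 ≤ t) : conv f (conv g h) t = conv (conv f g) h t := by
  have key := triangle_swap (fun σ s => f (t - σ) * (g (σ - s) * h s)) (by fun_prop) ht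
  have lhs : conv f (conv g h) t
      = ∫ σ in (0:ℝ)..t, ∫ s in (0:ℝ)..σ, f (t - σ) * (g (σ - s) * h s) := by
    unfold conv
    refine intervalIntegral.integral_congr fun σ hσ => ?_
    rw [← intervalIntegral.integral_const_mul]
  have rhs : conv (conv f g) h t
      = ∫ s in (0:ℝ)..t, ∫ σ in s..t, f (t - σ) * (g (σ - s) * h s) := by
    unfold conv
    refine intervalIntegral.integral_congr fun s hs => ?_
    rw [uIcc_of_le ht] at hs
    have sub : (∫ r in (0:ℝ)..(t - s - 0), f (t - s - r) * g r)
        = ∫ σ in s..t, f (t - σ) * g (σ - s) := by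
      rw [show (∫ r in (0:ℝ)..(t - s - 0), f (t - s - r) * g r)
          = ∫ r in (0:ℝ)..(t - s), (fun σ => f (t - σ) * g (σ - s)) (r + s) from by
        rw [sub_zero]
        exact intervalIntegral.integral_congr fun r hr => by
          simp only [add_sub_cancel_right]
          ring_nf]
      rw [intervalIntegral.integral_comp_add_right (fun σ => f (t - σ) * g (σ - s)) s,
        sub_add_cancel, zero_add]
    rw [show (∫ σ in s..t, f (t - σ) * (g (σ - s) * h s))
        = ∫ σ in s..t, (f (t - σ) * g (σ - s)) * h s from
        intervalIntegral.integral_congr fun σ _ => by ring,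
      intervalIntegral.integral_mul_const, ← sub]
    simp [sub_zero]
  rw [lhs, rhs]
  exact key

lemma convPow_continuous {M : ℝ → ℝ} (hM : Continuous M) : ∀ j, Continuous (convPow M j)
  | 0 => continuous_const
  | 1 => hM
  | (j+2) => conv_continuous hM (convPow_continuous hM (j+1))

lemma convPow_congr {M₁ M₂ : ℝ → ℝ} (h : ∀ τ : ℝ, 0 ≤ τ → M₁ τ = M₂ τ) :
    ∀ j, ∀ τ : ℝ, 0 ≤ τ → convPow M₁ j τ = convPow M₂ j τ
  | 0 => fun τ _ => rfl
  | 1 => fun τ hτ => h τ hτ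
  | (j+2) => fun τ hτ => by
      show conv M₁ (convPow M₁ (j+1)) τ = conv M₂ (convPow M₂ (j+1)) τ
      unfold conv
      refine intervalIntegral.integral_congr fun s hs => ?_
      rw [uIcc_of_le hτ] at hs
      rw [h (τ - s) (by linarith [hs.2]), convPow_congr h (j+1) s hs.1]

lemma convPow_bound {M : ℝ → ℝ} {C T : ℝ} (hM : Continuous M) (hC0 : 0 ≤ C)
    (hC : ∀ τ ∈ Icc (0:ℝ) T, |M τ| ≤ C) :
    ∀ j, ∀ τ ∈ Icc (0:ℝ) T, |convPow M (j+1) τ| ≤ C^(j+1) * τ^j / (j.factorial : ℝ) := by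
  intro j
  induction j with
  | zero => intro τ hτ; simpa [convPow] using hC τ hτ
  | succ j ih =>
    intro τ hτ
    have hτ0 : (0:ℝ) ≤ τ := hτ.1
    have habs : |convPow M (j+2) τ|
        ≤ ∫ s in (0:ℝ)..τ, |M (τ - s) * convPow M (j+1) s| := by
      show |∫ s in (0:ℝ)..τ, M (τ - s) * convPow M (j+1) s| ≤ _
      exact intervalIntegral.abs_integral_le_integral_abs hτ0
    have hmono : (∫ s in (0:ℝ)..τ, |M (τ - s) * convPow M (j+1) s|)
        ≤ ∫ s in (0:ℝ)..τ, C * (C^(j+1) * s^j / (j.factorial : ℝ)) := by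
      refine intervalIntegral.integral_mono_on hτ0 ?_ ?_ ?_
      · exact ((hM.comp (continuous_const.sub continuous_id)).mul
          (convPow_continuous hM (j+1))).abs.intervalIntegrable _ _
      · exact (Continuous.intervalIntegrable (by fun_prop) _ _)
      · intro s hs
        rw [abs_mul]
        refine mul_le_mul (hC _ ⟨by linarith [hs.2], by linarith [hs.1, hτ.2]⟩)
          (ih s ⟨hs.1, le_trans hs.2 hτ.2⟩) (abs_nonneg _) hC0
    have hcomp : (∫ s in (0:ℝ)..τ, C * (C^(j+1) * s^j / (j.factorial : ℝ)))
        = C^(j+2) * τ^(j+1) / ((j+1).factorial : ℝ) := by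
      rw [show (fun s : ℝ => C * (C^(j+1) * s^j / (j.factorial : ℝ)))
          = fun s : ℝ => (C^(j+2) / (j.factorial : ℝ)) * s^j from by
        funext s; ring]
      rw [intervalIntegral.integral_const_mul, integral_pow]
      rw [Nat.factorial_succ]
      push_cast
      rw [div_mul_div_comm, mul_comm ((j.factorial : ℝ))]
      norm_num
    calc |convPow M (j+2) τ| ≤ _ := habs
      _ ≤ _ := hmono
      _ = _ := hcomp

lemma convPow_exp (η : ℝ) :
    ∀ k, ∀ s : ℝ, 0 ≤ s →
      convPow (fun x => Real.exp (-η * x)) (k+1) s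
        = s^k / (k.factorial : ℝ) * Real.exp (-η * s) := by
  intro k
  induction k with
  | zero => intro s hs; simp [convPow]
  | succ k ih =>
    intro s hs
    show conv (fun x => Real.exp (-η * x)) (convPow (fun x => Real.exp (-η * x)) (k+1)) s = _
    unfold conv
    rw [show (∫ r in (0:ℝ)..s, Real.exp (-η * (s - r))
          * convPow (fun x => Real.exp (-η * x)) (k+1) r)
        = ∫ r in (0:ℝ)..s, (Real.exp (-η * s) / (k.factorial : ℝ)) * r^k from
      intervalIntegral.integral_congr fun r hr => by
        rw [uIcc_of_le hs] at hr
        rw [ih r hr.1]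
        have hexp : Real.exp (-η * (s - r)) * Real.exp (-η * r) = Real.exp (-η * s) := by
          rw [← Real.exp_add]; ring_nf
        calc Real.exp (-η * (s - r)) * (r^k / (k.factorial : ℝ) * Real.exp (-η * r))
            = (Real.exp (-η * (s - r)) * Real.exp (-η * r)) * (r^k / (k.factorial : ℝ)) := by
              ring
          _ = _ := by rw [hexp]; ring]
    rw [intervalIntegral.integral_const_mul, integral_pow, Nat.factorial_succ]
    have h1 : ((k.factorial : ℝ)) ≠ 0 := Nat.cast_ne_zero.mpr k.factorial_ne_zero
    have h2 : ((k:ℝ) + 1) ≠ 0 := by positivity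
    push_cast
    field_simp
    ring

/-- For `M` continuous on `[0,∞)` and `η ∈ ℝ`, the `C¹` solution of the
memory ODE satisfies `w_η(t) = e^{-ηt} + ∫_0^t K_M(t,s) e^{-ηs} ds` for all `t ≥ 0`. -/
theorem memory_ode_kernel_representation
    (M : ℝ → ℝ) (hM : ContinuousOn M (Set.Ici 0)) (η : ℝ)
    (w : ℝ → ℝ) (hw : IsMemorySol M η w) :
    ∀ t : ℝ, 0 ≤ t →
      w t = Real.exp (-η * t) + ∫ s in (0:ℝ)..t, KM M t s * Real.exp (-η * s) := by
  obtain ⟨hw1, hw0, hode⟩ := hw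
  -- globally continuous extensions
  set Mc : ℝ → ℝ := fun x => M (max x 0) with hMc_def
  have hMc : Continuous Mc :=
    hM.comp_continuous (continuous_id.max continuous_const) (fun x => le_max_right x 0)
  have hMceq : ∀ τ : ℝ, 0 ≤ τ → M τ = Mc τ := by
    intro τ hτ
    simp only [hMc_def, max_eq_left hτ]
  have hwcont : ContinuousOn w (Ici 0) := hw1.continuousOn
  set wc : ℝ → ℝ := fun x => w (max x 0) with hwc_def
  have hwc : Continuous wc :=
    hwcont.comp_continuous (continuous_id.max continuous_const) (fun x => le_max_right x 0)
  have hwceq : ∀ τ : ℝ, 0 ≤ τ → w τ = wc τ := by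
    intro τ hτ
    simp only [hwc_def, max_eq_left hτ]
  set u : ℝ → ℝ := fun x => Real.exp (-η * x) with hu_def
  have hu : Continuous u := by fun_prop
  set N : ℝ → ℝ := conv u Mc with hN_def
  have hN : Continuous N := conv_continuous hu hMc
  -- the Volterra integral equation
  have hVolt : ∀ τ : ℝ, 0 ≤ τ → wc τ = u τ - conv u (conv Mc wc) τ := by
    intro τ hτ
    have hconv_eq : ∀ σ : ℝ, 0 ≤ σ →
        (∫ s in (0:ℝ)..σ, M (σ - s) * w s) = conv Mc wc σ := by
      intro σ hσ
      unfold conv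
      refine intervalIntegral.integral_congr fun s hs => ?_
      rw [uIcc_of_le hσ] at hs
      rw [hMceq (σ - s) (by linarith [hs.2]), hwceq s hs.1]
    have hexpw : ContinuousOn (fun σ => Real.exp (η * σ) * w σ) (Icc 0 τ) := by
      refine ContinuousOn.mul ?_ (hwcont.mono (fun x hx => hx.1))
      exact (Real.continuous_exp.comp (continuous_const.mul continuous_id)).continuousOn
    have hftc : (∫ σ in (0:ℝ)..τ, -(Real.exp (η * σ) * conv Mc wc σ))
        = Real.exp (η * τ) * w τ - Real.exp (η * 0) * w 0 := by
      refine intervalIntegral.integral_eq_sub_of_hasDeriv_right_of_le hτ hexpw ?_ ?_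
      · intro σ hσ
        have hσ0 : (0:ℝ) < σ := hσ.1
        have hmem : Ici (0:ℝ) ∈ nhds σ := Ici_mem_nhds hσ0
        have hdw : DifferentiableAt ℝ w σ :=
          ((hw1.differentiableOn one_ne_zero) σ (le_of_lt hσ0)).differentiableAt hmem
        have hdd := hode σ (le_of_lt hσ0)
        rw [derivWithin_of_mem_nhds hmem] at hdd
        have hderiv_w : deriv w σ = -(η * w σ) - conv Mc wc σ := by
          rw [← hconv_eq σ (le_of_lt hσ0)]
          linarith
        have h1 : HasDerivAt (fun y : ℝ => Real.exp (η * y)) (η * Real.exp (η * σ)) σ := by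
          have := (Real.hasDerivAt_exp (η * σ)).comp σ ((hasDerivAt_id σ).const_mul η)
          simpa [mul_comm, Function.comp_def] using this
        have hD : HasDerivAt (fun y => Real.exp (η * y) * w y)
            (η * Real.exp (η * σ) * w σ + Real.exp (η * σ) * deriv w σ) σ :=
          h1.mul hdw.hasDerivAt
        have : η * Real.exp (η * σ) * w σ + Real.exp (η * σ) * deriv w σ
            = -(Real.exp (η * σ) * conv Mc wc σ) := by
          rw [hderiv_w]; ring
        rw [this] at hD
        exact hD.hasDerivWithinAt
      · exact ((Real.continuous_exp.comp (continuous_const.mul continuous_id)).mul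
          (conv_continuous hMc hwc)).neg.intervalIntegrable _ _
    have hI : (∫ σ in (0:ℝ)..τ, Real.exp (η * σ) * conv Mc wc σ)
        = 1 - Real.exp (η * τ) * w τ := by
      have := hftc
      rw [intervalIntegral.integral_neg] at this
      rw [hw0] at this
      simp only [mul_zero, Real.exp_zero, one_mul] at this
      linarith
    have h2 : conv u (conv Mc wc) τ
        = u τ * ∫ σ in (0:ℝ)..τ, Real.exp (η * σ) * conv Mc wc σ := by
      show (∫ σ in (0:ℝ)..τ, u (τ - σ) * conv Mc wc σ) = _
      rw [← intervalIntegral.integral_const_mul]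
      refine intervalIntegral.integral_congr fun σ _ => ?_
      have : u (τ - σ) = u τ * Real.exp (η * σ) := by
        simp only [hu_def]
        rw [← Real.exp_add]
        ring_nf
      rw [this]; ring
    have huτ : u τ * Real.exp (η * τ) = 1 := by
      simp only [hu_def]
      rw [← Real.exp_add]
      ring_nf
      exact Real.exp_zero
    rw [← hwceq τ hτ] at *
    rw [h2, hI]
    have : u τ * (1 - Real.exp (η * τ) * w τ) = u τ - (u τ * Real.exp (η * τ)) * w τ := by ring
    rw [this, huτ]
    ring
  -- fix t
  intro t ht
  -- the series terms
  set f : ℕ → ℝ → ℝ := fun j s =>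
    ((-s)^j / (j.factorial : ℝ) * convPow Mc j (t - s)) * Real.exp (-η * s) with hf_def
  set Ψ : ℕ → ℝ := fun j => ∫ s in (0:ℝ)..t, f j s with hΨ_def
  have hfc : ∀ j, Continuous (f j) := by
    intro j
    apply Continuous.mul
    · exact (((continuous_id.neg.pow j).div_const _).mul
        ((convPow_continuous hMc j).comp (continuous_const.sub continuous_id)))
    · fun_prop
  -- mixed power identity
  have mixed : ∀ k, ∀ τ : ℝ, 0 ≤ τ →
      convPow N (k+1) τ = conv (convPow Mc (k+1)) (convPow u (k+1)) τ := by
    intro k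
    induction k with
    | zero =>
      intro τ hτ
      show N τ = conv Mc u τ
      rw [hN_def, conv_comm]
    | succ k ih =>
      intro τ hτ
      have hA : Continuous (convPow Mc (k+1)) := convPow_continuous hMc (k+1)
      have hB : Continuous (convPow u (k+1)) := convPow_continuous hu (k+1)
      show conv N (convPow N (k+1)) τ
          = conv (conv Mc (convPow Mc (k+1))) (conv u (convPow u (k+1))) τ
      rw [conv_congr_right N hτ (fun s hs => ih s hs.1), hN_def]
      calc conv (conv u Mc) (conv (convPow Mc (k+1)) (convPow u (k+1))) τ
          = conv u (conv Mc (conv (convPow Mc (k+1)) (convPow u (k+1)))) τ :=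
            (conv_assoc hu hMc (conv_continuous hA hB) hτ).symm
        _ = conv u (conv (conv Mc (convPow Mc (k+1))) (convPow u (k+1))) τ :=
            conv_congr_right u hτ (fun σ hσ => conv_assoc hMc hA hB hσ.1)
        _ = conv u (conv (convPow u (k+1)) (conv Mc (convPow Mc (k+1)))) τ := by
            rw [conv_comm (conv Mc (convPow Mc (k+1))) (convPow u (k+1))]
        _ = conv (conv u (convPow u (k+1))) (conv Mc (convPow Mc (k+1))) τ :=
            conv_assoc hu hB (conv_continuous hMc hA) hτ
        _ = conv (conv Mc (convPow Mc (k+1))) (conv u (convPow u (k+1))) τ := by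
            rw [conv_comm]
  -- identification of the iterated-kernel terms with the series terms
  have psi_eq : ∀ k : ℕ, (-1:ℝ)^(k+1) * conv (convPow N (k+1)) u t = Ψ (k+1) := by
    intro k
    have hA : Continuous (convPow Mc (k+1)) := convPow_continuous hMc (k+1)
    have hB : Continuous (convPow u (k+1)) := convPow_continuous hu (k+1)
    have e1 : conv (convPow N (k+1)) u t
        = conv (conv (convPow Mc (k+1)) (convPow u (k+1))) u t :=
      conv_congr_left u ht (fun s hs => mixed k s hs.1)
    have e2 : conv (conv (convPow Mc (k+1)) (convPow u (k+1))) u t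
        = conv (convPow Mc (k+1)) (convPow u (k+2)) t := by
      rw [← conv_assoc hA hB hu ht, conv_comm (convPow u (k+1)) u]
      rfl
    have e3 : conv (convPow Mc (k+1)) (convPow u (k+2)) t
        = conv (convPow Mc (k+1))
            (fun s => s^(k+1) / ((k+1).factorial : ℝ) * Real.exp (-η * s)) t :=
      conv_congr_right _ ht (fun s hs => convPow_exp η (k+1) s hs.1)
    rw [e1, e2, e3, hΨ_def]
    show (-1:ℝ)^(k+1) * ∫ s in (0:ℝ)..t,
        convPow Mc (k+1) (t - s) * (s^(k+1) / ((k+1).factorial : ℝ) * Real.exp (-η * s)) = _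
    rw [← intervalIntegral.integral_const_mul]
    refine intervalIntegral.integral_congr fun s _ => ?_
    simp only [hf_def]
    rw [neg_pow s (k+1)]
    ring
  -- the key Picard-iteration identity
  have key : ∀ n : ℕ, wc t = u t + (∑ j ∈ Finset.range (n+1), Ψ j)
      + (-1:ℝ)^(n+1) * conv (convPow N (n+1)) wc t := by
    intro n
    induction n with
    | zero =>
      have hΨ0 : Ψ 0 = 0 := by
        simp only [hΨ_def, hf_def]
        have : ∀ s : ℝ, ((-s)^0 / ((Nat.factorial 0 : ℕ) : ℝ) * convPow Mc 0 (t - s))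
            * Real.exp (-η * s) = 0 := by
          intro s
          show ((-s)^0 / ((Nat.factorial 0 : ℕ) : ℝ) * (0:ℝ)) * Real.exp (-η * s) = 0
          ring
        simp only [this, intervalIntegral.integral_zero]
      rw [Finset.sum_range_one, hΨ0]
      have h1 : conv (convPow N 1) wc t = conv u (conv Mc wc) t := by
        show conv N wc t = _
        rw [hN_def]
        exact (conv_assoc hu hMc hwc ht).symm
      rw [h1]
      have := hVolt t ht
      rw [this]
      ring
    | succ n ih =>
      have hF : Continuous (convPow N (n+1)) := convPow_continuous hN (n+1)
      have split : conv (convPow N (n+1)) wc t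
          = conv (convPow N (n+1)) u t - conv (convPow N (n+2)) wc t := by
        have e1 : conv (convPow N (n+1)) wc t
            = conv (convPow N (n+1)) (fun s => u s - conv N wc s) t := by
          refine conv_congr_right _ ht (fun s hs => ?_)
          rw [hVolt s hs.1]
          have : conv u (conv Mc wc) s = conv N wc s := by
            rw [hN_def]
            exact conv_assoc hu hMc hwc hs.1
          rw [this]
        have e2 : conv (convPow N (n+1)) (fun s => u s - conv N wc s) t
            = conv (convPow N (n+1)) u t - conv (convPow N (n+1)) (conv N wc) t := by
          show (∫ s in (0:ℝ)..t, convPow N (n+1) (t - s) * (u s - conv N wc s))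
              = (∫ s in (0:ℝ)..t, convPow N (n+1) (t - s) * u s)
                - ∫ s in (0:ℝ)..t, convPow N (n+1) (t - s) * conv N wc s
          have i1 : IntervalIntegrable (fun s : ℝ => convPow N (n+1) (t - s) * u s)
              MeasureTheory.volume 0 t :=
            ((hF.comp (continuous_const.sub continuous_id)).mul hu).intervalIntegrable 0 t
          have i2 : IntervalIntegrable (fun s : ℝ => convPow N (n+1) (t - s) * conv N wc s)
              MeasureTheory.volume 0 t :=
            ((hF.comp (continuous_const.sub continuous_id)).mul
              (conv_continuous hN hwc)).intervalIntegrable 0 t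
          rw [← intervalIntegral.integral_sub i1 i2]
          refine intervalIntegral.integral_congr fun s _ => ?_
          ring
        have e3 : conv (convPow N (n+1)) (conv N wc) t = conv (convPow N (n+2)) wc t := by
          rw [conv_assoc hF hN hwc ht]
          rw [show conv (convPow N (n+1)) N = convPow N (n+2) from by rw [conv_comm]; rfl]
        rw [e1, e2, e3]
      rw [Finset.sum_range_succ]
      have hψ := psi_eq n
      have hpow : (-1:ℝ)^(n+2) = -(-1:ℝ)^(n+1) := by
        rw [pow_succ]; ring
      calc wc t = u t + (∑ j ∈ Finset.range (n+1), Ψ j)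
            + (-1:ℝ)^(n+1) * conv (convPow N (n+1)) wc t := ih
        _ = u t + ((∑ j ∈ Finset.range (n+1), Ψ j) + Ψ (n+1))
            + (-1:ℝ)^(n+2) * conv (convPow N (n+2)) wc t := by
          rw [split, ← hψ, hpow]
          ring
  -- bounds
  obtain ⟨Cm, hCm⟩ := (isCompact_Icc (a := (0:ℝ)) (b := t)).exists_bound_of_continuousOn
    hMc.continuousOn
  have hCm0 : 0 ≤ Cm := le_trans (norm_nonneg _) (hCm 0 ⟨le_rfl, ht⟩)
  obtain ⟨D, hD⟩ := (isCompact_Icc (a := (0:ℝ)) (b := t)).exists_bound_of_continuousOn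
    hN.continuousOn
  have hD0 : 0 ≤ D := le_trans (norm_nonneg _) (hD 0 ⟨le_rfl, ht⟩)
  obtain ⟨W, hW⟩ := (isCompact_Icc (a := (0:ℝ)) (b := t)).exists_bound_of_continuousOn
    hwc.continuousOn
  have hW0 : 0 ≤ W := le_trans (norm_nonneg _) (hW 0 ⟨le_rfl, ht⟩)
  -- remainder tends to zero
  have hRem : Filter.Tendsto (fun n => (-1:ℝ)^(n+1) * conv (convPow N (n+1)) wc t)
      Filter.atTop (nhds 0) := by
    apply squeeze_zero_norm (a := fun n => (D^(n+1) * t^n / (n.factorial : ℝ)) * W * t)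
    · intro n
      rw [norm_mul, norm_pow, norm_neg, norm_one, one_pow, one_mul]
      have hb : ∀ x ∈ Set.uIoc (0:ℝ) t,
          ‖convPow N (n+1) (t - x) * wc x‖ ≤ D^(n+1) * t^n / (n.factorial : ℝ) * W := by
        intro x hx
        rw [Set.uIoc_of_le ht] at hx
        rw [norm_mul]
        have h1 : ‖convPow N (n+1) (t - x)‖ ≤ D^(n+1) * t^n / (n.factorial : ℝ) := by
          have := convPow_bound hN hD0 hD n (t - x) ⟨by linarith [hx.2], by linarith [hx.1]⟩
          rw [Real.norm_eq_abs]
          refine le_trans this ?_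
          have h2 : (t - x)^n ≤ t^n :=
            pow_le_pow_left₀ (by linarith [hx.2]) (by linarith [hx.1]) n
          gcongr
        have h2 : ‖wc x‖ ≤ W := hW x ⟨le_of_lt hx.1, hx.2⟩
        exact mul_le_mul h1 h2 (norm_nonneg _) (by positivity)
      have := intervalIntegral.norm_integral_le_of_norm_le_const hb
      have habs : |t - 0| = t := by rw [sub_zero, abs_of_nonneg ht]
      rw [habs] at this
      calc ‖conv (convPow N (n+1)) wc t‖ ≤ D^(n+1) * t^n / (n.factorial : ℝ) * W * t := this
        _ = (D^(n+1) * t^n / (n.factorial : ℝ)) * W * t := by ring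
    · have heq : (fun n : ℕ => D^(n+1) * t^n / (n.factorial : ℝ) * W * t)
          = fun n : ℕ => (D * W * t) * ((D * t)^n / (n.factorial : ℝ)) := by
        funext n
        rw [pow_succ]
        field_simp
        ring
      rw [heq]
      have := (FloorSemiring.tendsto_pow_div_factorial_atTop (K := ℝ) (D * t)).const_mul
        (D * W * t)
      simpa using this
  -- summability
  set E : ℝ := Real.exp (|η| * t) with hE_def
  have hE0 : 0 < E := Real.exp_pos _
  set c : ℕ → ℝ := fun j => (E * Cm * t) * ((Cm * t^2)^j / (j.factorial : ℝ)) with hc_def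
  have hcs : Summable c := (Real.summable_pow_div_factorial (Cm * t^2)).mul_left _
  have hfb : ∀ j : ℕ, ∀ s ∈ Icc (0:ℝ) t, ‖f (j+1) s‖ ≤ c j := by
    intro j s hs
    have hs0 : (0:ℝ) ≤ s := hs.1
    have hst : s ≤ t := hs.2
    simp only [hf_def]
    rw [norm_mul, norm_mul, norm_div]
    have hb1 : ‖(-s)^(j+1)‖ / ‖((j+1).factorial : ℝ)‖ ≤ t^(j+1) := by
      rw [norm_pow, norm_neg, Real.norm_eq_abs, abs_of_nonneg hs0, Real.norm_eq_abs,
        abs_of_nonneg (by positivity : (0:ℝ) ≤ (((j+1).factorial : ℕ) : ℝ))]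
      have h1 : s^(j+1) / (((j+1).factorial : ℕ) : ℝ) ≤ s^(j+1) := by
        apply div_le_self (by positivity)
        exact_mod_cast Nat.one_le_iff_ne_zero.mpr (Nat.factorial_ne_zero _)
      exact h1.trans (pow_le_pow_left₀ hs0 hst (j+1))
    have hb2 : ‖convPow Mc (j+1) (t - s)‖ ≤ Cm^(j+1) * t^j / (j.factorial : ℝ) := by
      rw [Real.norm_eq_abs]
      refine le_trans (convPow_bound hMc hCm0 (fun τ hτ => by
        rw [← Real.norm_eq_abs]; exact hCm τ hτ) j (t - s)
        ⟨by linarith, by linarith⟩) ?_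
      have h2 : (t - s)^j ≤ t^j := pow_le_pow_left₀ (by linarith) (by linarith) j
      gcongr
    have hb3 : ‖Real.exp (-η * s)‖ ≤ E := by
      rw [Real.norm_eq_abs, abs_of_nonneg (le_of_lt (Real.exp_pos _)), hE_def]
      apply Real.exp_le_exp.mpr
      calc -η * s ≤ |(-η) * s| := le_abs_self _
        _ = |η| * s := by rw [abs_mul, abs_neg, abs_of_nonneg hs0]
        _ ≤ |η| * t := mul_le_mul_of_nonneg_left hst (abs_nonneg _)
    calc ‖(-s)^(j+1)‖ / ‖(((j+1).factorial : ℕ) : ℝ)‖ * ‖convPow Mc (j+1) (t - s)‖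
          * ‖Real.exp (-η * s)‖
        ≤ t^(j+1) * (Cm^(j+1) * t^j / (j.factorial : ℝ)) * E := by
          refine mul_le_mul (mul_le_mul hb1 hb2 (norm_nonneg _) (by positivity)) hb3
            (norm_nonneg _) (by positivity)
      _ = c j := by
          rw [hc_def]
          have h3 : ((j.factorial : ℕ) : ℝ) ≠ 0 := by positivity
          field_simp
          ring
  have hΨb : ∀ j : ℕ, ‖Ψ (j+1)‖ ≤ c j * t := by
    intro j
    rw [hΨ_def]
    have := intervalIntegral.norm_integral_le_of_norm_le_const
      (C := c j) (f := f (j+1)) (a := 0) (b := t)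
      (fun x hx => hfb j x (by rw [Set.uIoc_of_le ht] at hx; exact ⟨le_of_lt hx.1, hx.2⟩))
    rwa [sub_zero, abs_of_nonneg ht] at this
  have hΨsum : Summable Ψ := by
    rw [← summable_nat_add_iff 1]
    exact Summable.of_norm_bounded (hcs.mul_right t) hΨb
  -- identify the sum of the series
  have hPsiTsum : (∑' j, Ψ j) = wc t - u t := by
    have h1 : Filter.Tendsto (fun n => ∑ j ∈ Finset.range (n+1), Ψ j)
        Filter.atTop (nhds (∑' j, Ψ j)) :=
      hΨsum.hasSum.tendsto_sum_nat.comp (Filter.tendsto_add_atTop_nat 1)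
    have h2 : Filter.Tendsto (fun n => ∑ j ∈ Finset.range (n+1), Ψ j)
        Filter.atTop (nhds (wc t - u t)) := by
      have heq : (fun n => ∑ j ∈ Finset.range (n+1), Ψ j)
          = fun n => wc t - u t - (-1:ℝ)^(n+1) * conv (convPow N (n+1)) wc t := by
        funext n
        have := key n
        linarith
      rw [heq]
      simpa using Filter.Tendsto.sub
        (tendsto_const_nhds (x := wc t - u t) (f := Filter.atTop)) hRem
    exact tendsto_nhds_unique h1 h2
  -- swap sum and integral
  have hswap : (∫ s in (0:ℝ)..t, KM Mc t s * Real.exp (-η * s)) = ∑' j, Ψ j := by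
    have hψIoc : ∀ j, Ψ j = ∫ s in Ioc (0:ℝ) t, f j s := by
      intro j
      show (∫ s in (0:ℝ)..t, f j s) = _
      rw [intervalIntegral.integral_of_le ht]
    have hInt : ∀ j : ℕ, Integrable (f j) (MeasureTheory.volume.restrict (Ioc (0:ℝ) t)) :=
      fun j => ((hfc j).integrableOn_Icc).mono_set Ioc_subset_Icc_self
    have hf0 : ∀ s : ℝ, f 0 s = 0 := by
      intro s
      show ((-s)^0 / ((Nat.factorial 0 : ℕ) : ℝ) * (0:ℝ)) * Real.exp (-η * s) = 0
      ring
    have hIntNorm : Summable fun j => ∫ s in Ioc (0:ℝ) t, ‖f j s‖ := by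
      rw [← summable_nat_add_iff 1]
      refine Summable.of_nonneg_of_le
        (fun j => integral_nonneg (fun s => norm_nonneg _))
        (fun j => ?_) (hcs.mul_right t)
      have hle : (∫ s in Ioc (0:ℝ) t, ‖f (j+1) s‖) ≤ ∫ _ in Ioc (0:ℝ) t, c j := by
        refine setIntegral_mono_on (hInt (j+1)).norm (integrableOn_const ?_)
          measurableSet_Ioc (fun s hs => hfb j s ⟨le_of_lt hs.1, hs.2⟩)
        exact measure_Ioc_lt_top.ne
      refine hle.trans ?_
      rw [setIntegral_const, measureReal_def, Real.volume_Ioc, smul_eq_mul]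
      rw [ENNReal.toReal_ofReal (by linarith)]
      rw [sub_zero, mul_comm]
    have hmain := MeasureTheory.integral_tsum_of_summable_integral_norm hInt hIntNorm
    rw [intervalIntegral.integral_of_le ht]
    have hpt : ∀ s : ℝ, KM Mc t s * Real.exp (-η * s) = ∑' j, f j s := by
      intro s
      rw [KM]
      exact (tsum_mul_right).symm
    calc (∫ s in Ioc (0:ℝ) t, KM Mc t s * Real.exp (-η * s))
        = ∫ s in Ioc (0:ℝ) t, ∑' j, f j s := by
          refine setIntegral_congr_fun measurableSet_Ioc (fun s _ => hpt s)
      _ = ∑' j, ∫ s in Ioc (0:ℝ) t, f j s := hmain.symm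
      _ = ∑' j, Ψ j := by
          refine tsum_congr fun j => (hψIoc j).symm
  -- final assembly
  have hKMcongr : (∫ s in (0:ℝ)..t, KM M t s * Real.exp (-η * s))
      = ∫ s in (0:ℝ)..t, KM Mc t s * Real.exp (-η * s) := by
    refine intervalIntegral.integral_congr fun s hs => ?_
    rw [uIcc_of_le ht] at hs
    have : KM M t s = KM Mc t s := by
      rw [KM, KM]
      refine tsum_congr fun j => ?_
      rw [convPow_congr hMceq j (t - s) (by linarith [hs.2])]
    rw [this]
  rw [hKMcongr, hswap, hPsiTsum, hwceq t ht]
  simp only [hu_def]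
  ring
end

section
/- Let α, λ ∈ ℝ with α ≠ 0 and define M(t) := α e^{λ t} for t ≥ 0. Then for every integer l ≥ 1, the sets {t ≥ 0 : h_l(t) = 0} and {t ≥ 0 : p_l(t) = 0} each have Lebesgue measure zero; in other words, h_l(t) ≠ 0 and p_l(t) ≠ 0 for almost every t ≥ 0. -/
open Set MeasureTheory

/-- The coefficient `h_l(t) = (-1)^l ∑_{j=0}^l C(l, l-j) (d^{l-j}/dt^{l-j} M^{*j})(t)`
(derivatives taken within `[0,∞)`; recall the convention `M^{*0} = 0`). -/
noncomputable def hcoef (M : ℝ → ℝ) (l : ℕ) (t : ℝ) : ℝ :=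
  (-1 : ℝ) ^ l * ∑ j ∈ Finset.range (l + 1),
    (l.choose (l - j) : ℝ) * iteratedDerivWithin (l - j) (convPow M j) (Set.Ici 0) t

/-- The coefficient
`p_l(t) = −h_l(0) + (-1)^{l+1} ∑_{(m,j)} C(l, l-j+m) ((d^{l-j+m}/dt^{l-j+m}) M^{*j})(0) (-t)^m/m!`,
where the sum runs over pairs of positive integers `(m,j)` with `2j − l − 1 ≤ m ≤ j`
(equivalently `2j ≤ m + l + 1`; all such pairs satisfy `m ≤ j ≤ l + 1`, and the exponent
`l - j + m` is the natural number `l + m - j ≥ 0`). -/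
noncomputable def pcoef (M : ℝ → ℝ) (l : ℕ) (t : ℝ) : ℝ :=
  -hcoef M l 0 + (-1 : ℝ) ^ (l + 1) *
    ∑ j ∈ Finset.Icc 1 (l + 1), ∑ m ∈ Finset.Icc 1 j,
      if 2 * j ≤ m + l + 1 then
        (l.choose (l + m - j) : ℝ) *
          iteratedDerivWithin (l + m - j) (convPow M j) (Set.Ici 0) 0 *
          ((-t) ^ m / (m.factorial : ℝ))
      else 0

namespace Statement19Aux

open Polynomial

/-- The operator `q ↦ q' + λ q` on polynomials. -/
noncomputable def Dl (lam : ℝ) : Module.End ℝ (Polynomial ℝ) := Polynomial.derivative + lam • 1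

lemma Dl_apply (lam : ℝ) (q : Polynomial ℝ) :
    Dl lam q = Polynomial.derivative q + lam • q := by simp [Dl]

lemma hasDerivAt_evalExp (lam : ℝ) (q : Polynomial ℝ) (t : ℝ) :
    HasDerivAt (fun x => Polynomial.eval x q * Real.exp (lam * x))
      (Polynomial.eval t (Dl lam q) * Real.exp (lam * t)) t := by
  have h1 : HasDerivAt (fun x => Polynomial.eval x q)
      (Polynomial.eval t (Polynomial.derivative q)) t := q.hasDerivAt t
  have h2 : HasDerivAt (fun x : ℝ => Real.exp (lam * x)) (Real.exp (lam * t) * lam) t := by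
    simpa using ((hasDerivAt_id t).const_mul lam).exp
  have := h1.mul h2
  refine HasDerivAt.congr_deriv this ?_
  simp [Dl_apply]
  ring

lemma iterWithin (lam : ℝ) (q : Polynomial ℝ) (n : ℕ) :
    Set.EqOn
      (iteratedDerivWithin n (fun x => Polynomial.eval x q * Real.exp (lam * x)) (Set.Ici 0))
      (fun x => Polynomial.eval x ((Dl lam ^ n) q) * Real.exp (lam * x)) (Set.Ici 0) := by
  induction n with
  | zero => intro x hx; simp [iteratedDerivWithin_zero]
  | succ n ih =>
    intro x hx
    rw [iteratedDerivWithin_succ]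
    rw [derivWithin_congr ih (ih hx)]
    rw [DifferentiableAt.derivWithin (hasDerivAt_evalExp lam _ x).differentiableAt
      ((uniqueDiffOn_Ici 0) x hx)]
    rw [(hasDerivAt_evalExp lam ((Dl lam ^ n) q) x).deriv]
    rw [pow_succ']
    rfl

lemma Dl_pow_apply (lam : ℝ) (q : Polynomial ℝ) (n : ℕ) :
    (Dl lam ^ n) q = ∑ i ∈ Finset.range (n + 1),
      (lam ^ (n - i) * (n.choose i : ℝ)) • (Polynomial.derivative^[i] q) := by
  have hc : Commute (Polynomial.derivative : Module.End ℝ (Polynomial ℝ)) (lam • 1) :=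
    (Commute.one_right _).smul_right lam
  rw [Dl, hc.add_pow n, LinearMap.sum_apply]
  refine Finset.sum_congr rfl fun i hi => ?_
  rw [_root_.smul_pow, one_pow, Module.End.mul_apply, Module.End.mul_apply,
    Module.End.natCast_apply, LinearMap.smul_apply, Module.End.one_apply,
    _root_.map_smul, map_nsmul, Module.End.pow_apply, mul_smul, Nat.cast_smul_eq_nsmul]

lemma natDegree_Dl_pow (lam : ℝ) (q : Polynomial ℝ) (n : ℕ) :
    ((Dl lam ^ n) q).natDegree ≤ q.natDegree := by
  induction n generalizing q with
  | zero => simp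
  | succ n ih =>
    rw [pow_succ, Module.End.mul_apply]
    refine le_trans (ih _) ?_
    show (Polynomial.derivative q + lam • q).natDegree ≤ q.natDegree
    refine le_trans (Polynomial.natDegree_add_le _ _) ?_
    simp only [max_le_iff]
    exact ⟨le_trans (Polynomial.natDegree_derivative_le q) (Nat.sub_le _ _),
      Polynomial.natDegree_smul_le _ _⟩

lemma convPow_succ_eq (α lam : ℝ) (j : ℕ) :
    convPow (fun s => α * Real.exp (lam * s)) (j + 1)
      = fun t => (α ^ (j+1) / (Nat.factorial j : ℝ)) * t ^ j * Real.exp (lam * t) := by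
  induction j with
  | zero =>
    funext t
    show α * Real.exp (lam * t) = _
    simp
  | succ j ih =>
    funext t
    show conv (fun s => α * Real.exp (lam * s))
      (convPow (fun s => α * Real.exp (lam * s)) (j+1)) t = _
    rw [conv, ih]
    have hfun : (fun s => (α * Real.exp (lam * (t - s))) *
        ((α ^ (j+1) / (Nat.factorial j : ℝ)) * s ^ j * Real.exp (lam * s)))
        = fun s => (α * (α ^ (j+1) / (Nat.factorial j : ℝ)) * Real.exp (lam * t)) * s ^ j := by
      funext s
      rw [show α * Real.exp (lam * (t - s)) *
            ((α ^ (j+1) / (Nat.factorial j : ℝ)) * s ^ j * Real.exp (lam * s))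
          = α * (α ^ (j+1) / (Nat.factorial j : ℝ)) * s ^ j *
            (Real.exp (lam * (t-s)) * Real.exp (lam * s)) from by ring,
        ← Real.exp_add, show lam * (t - s) + lam * s = lam * t from by ring]
      ring
    rw [hfun, intervalIntegral.integral_const_mul, integral_pow]
    have h1 : ((Nat.factorial (j+1) : ℝ)) = (j+1 : ℝ) * (Nat.factorial j : ℝ) := by
      rw [Nat.factorial_succ]; push_cast; ring
    have h2 : (Nat.factorial j : ℝ) ≠ 0 := Nat.cast_ne_zero.mpr (Nat.factorial_ne_zero j)
    have h3 : ((j:ℝ) + 1) ≠ 0 := by positivity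
    field_simp [h1]
    rw [h1, zero_pow (Nat.succ_ne_zero j), sub_zero]
    ring

/-- The polynomial such that `M^{*j}(t) = pj(t) e^{λ t}`. -/
noncomputable def pj (α : ℝ) : ℕ → Polynomial ℝ
  | 0 => 0
  | (k+1) => Polynomial.C (α^(k+1) / (Nat.factorial k : ℝ)) * Polynomial.X^k

lemma convPow_eval (α lam : ℝ) (j : ℕ) :
    convPow (fun s => α * Real.exp (lam * s)) j
      = fun t => Polynomial.eval t (pj α j) * Real.exp (lam * t) := by
  cases j with
  | zero => funext t; simp [convPow, pj]
  | succ k => rw [convPow_succ_eq]; funext t; simp [pj]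

lemma iter_convPow (α lam : ℝ) (j n : ℕ) {x : ℝ} (hx : x ∈ Set.Ici (0:ℝ)) :
    iteratedDerivWithin n (convPow (fun s => α * Real.exp (lam * s)) j) (Set.Ici 0) x
      = Polynomial.eval x ((Dl lam ^ n) (pj α j)) * Real.exp (lam * x) := by
  rw [convPow_eval]; exact iterWithin lam (pj α j) n hx

lemma hcoef_eq (α lam : ℝ) (l : ℕ) {t : ℝ} (ht : t ∈ Set.Ici (0:ℝ)) :
    hcoef (fun s => α * Real.exp (lam * s)) l t
      = (-1:ℝ)^l * (Polynomial.eval t (∑ j ∈ Finset.range (l+1),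
          ((l.choose (l-j) : ℝ)) • ((Dl lam ^ (l-j)) (pj α j))) * Real.exp (lam * t)) := by
  unfold hcoef
  congr 1
  rw [Polynomial.eval_finset_sum, Finset.sum_mul]
  refine Finset.sum_congr rfl fun j hj => ?_
  rw [iter_convPow α lam j (l-j) ht, Polynomial.eval_smul, smul_eq_mul]
  ring

lemma Q_coeff (α lam : ℝ) (k : ℕ) :
    (∑ j ∈ Finset.range (k+2),
        (((k+1).choose (k+1-j) : ℝ)) • ((Dl lam ^ (k+1-j)) (pj α j))).coeff k
      = α^(k+1) / (Nat.factorial k : ℝ) := by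
  rw [Polynomial.finset_sum_coeff, Finset.sum_eq_single (k+1)]
  · rw [Nat.sub_self, pow_zero, Module.End.one_apply]
    simp [pj, Polynomial.coeff_C_mul, Polynomial.coeff_X_pow]
  · intro j hj hne
    rw [Polynomial.coeff_smul]
    have hjk : j ≤ k := by
      rw [Finset.mem_range] at hj; omega
    match j with
    | 0 => simp [pj]
    | (i+1) =>
      have hdeg : ((Dl lam ^ (k+1-(i+1))) (pj α (i+1))).natDegree < k := by
        refine lt_of_le_of_lt (le_trans (natDegree_Dl_pow _ _ _) ?_) (show i < k by omega)
        show (Polynomial.C (α^(i+1) / (Nat.factorial i : ℝ)) * Polynomial.X^i).natDegree ≤ i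
        refine le_trans (Polynomial.natDegree_C_mul_le _ _) ?_
        simp
      rw [Polynomial.coeff_eq_zero_of_natDegree_lt hdeg, smul_zero]
  · intro h
    exact absurd (Finset.self_mem_range_succ (k+1)) h

end Statement19Aux

/-- For `M(t) = α e^{λt}` with `α ≠ 0` and every integer `l ≥ 1`, the sets
`{t ≥ 0 : h_l(t) = 0}` and `{t ≥ 0 : p_l(t) = 0}` have Lebesgue measure zero; i.e.
`h_l(t) ≠ 0` and `p_l(t) ≠ 0` for almost every `t ≥ 0`. -/
theorem hcoef_pcoef_ae_nonzero_exp_kernel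
    (α lam : ℝ) (hα : α ≠ 0) (l : ℕ) (hl : 1 ≤ l) :
    MeasureTheory.volume
        {t : ℝ | 0 ≤ t ∧ hcoef (fun s => α * Real.exp (lam * s)) l t = 0} = 0 ∧
      MeasureTheory.volume
        {t : ℝ | 0 ≤ t ∧ pcoef (fun s => α * Real.exp (lam * s)) l t = 0} = 0 := by
  open Statement19Aux in
  obtain ⟨k, rfl⟩ : ∃ k, l = k + 1 := ⟨l - 1, (Nat.succ_pred_eq_of_pos hl).symm⟩
  set M : ℝ → ℝ := fun s => α * Real.exp (lam * s) with hM
  constructor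
  · -- h part
    set Q : Polynomial ℝ := ∑ j ∈ Finset.range (k+2),
      (((k+1).choose (k+1-j) : ℝ)) • ((Dl lam ^ (k+1-j)) (pj α j)) with hQdef
    have hQcoeff : Q.coeff k = α^(k+1) / (Nat.factorial k : ℝ) := Q_coeff α lam k
    have hQne : Q ≠ 0 := by
      intro h
      rw [h, Polynomial.coeff_zero] at hQcoeff
      exact (div_ne_zero (pow_ne_zero _ hα)
        (Nat.cast_ne_zero.mpr (Nat.factorial_ne_zero k))) hQcoeff.symm
    refine measure_mono_null (fun t ht => ?_)
      ((Polynomial.finite_setOf_isRoot hQne).measure_zero _)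
    obtain ⟨ht0, hz⟩ := ht
    rw [hcoef_eq α lam (k+1) ht0] at hz
    have hneg : ((-1:ℝ)^(k+1)) ≠ 0 := pow_ne_zero _ (by norm_num)
    have h1 := (mul_eq_zero.mp hz).resolve_left hneg
    exact (mul_eq_zero.mp h1).resolve_right (Real.exp_ne_zero _)
  · -- p part
    set D : ℕ → ℕ → ℝ := fun j m =>
      iteratedDerivWithin (k + 1 + m - j) (convPow M j) (Set.Ici 0) 0 with hDdef
    set R : Polynomial ℝ := Polynomial.C (-(hcoef M (k+1) 0)) + Polynomial.C ((-1:ℝ)^(k+1+1)) *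
      ∑ j ∈ Finset.Icc 1 (k+1+1), ∑ m ∈ Finset.Icc 1 j,
        if 2*j ≤ m + (k+1) + 1 then
          Polynomial.C (((k+1).choose (k+1+m-j) : ℝ) * D j m * ((-1:ℝ)^m / (m.factorial : ℝ)))
            * Polynomial.X^m
        else 0 with hRdef
    have hReval : ∀ t : ℝ, pcoef M (k+1) t = Polynomial.eval t R := by
      intro t
      show -hcoef M (k+1) 0 + (-1:ℝ)^(k+1+1) *
        ∑ j ∈ Finset.Icc 1 (k+1+1), ∑ m ∈ Finset.Icc 1 j,
          (if 2*j ≤ m + (k+1) + 1 then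
            ((k+1).choose (k+1+m-j) : ℝ) *
              iteratedDerivWithin (k+1+m-j) (convPow M j) (Set.Ici 0) 0 *
              ((-t)^m / (m.factorial : ℝ))
          else 0) = _
      rw [hRdef]
      rw [Polynomial.eval_add, Polynomial.eval_mul, Polynomial.eval_C, Polynomial.eval_C,
        Polynomial.eval_finset_sum]
      congr 2
      refine Finset.sum_congr rfl fun j hj => ?_
      rw [Polynomial.eval_finset_sum]
      refine Finset.sum_congr rfl fun m hm => ?_
      rw [apply_ite (Polynomial.eval t)]
      split_ifs with hcond
      · rw [Polynomial.eval_mul, Polynomial.eval_C, Polynomial.eval_pow, Polynomial.eval_X,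
          neg_pow]
        show _ * ((-1:ℝ)^m * t^m / _) = _
        ring
      · exact Polynomial.eval_zero.symm
    have hD2 : D (k+1+1) (k+1+1) = α^(k+2) := by
      rw [hDdef]
      show iteratedDerivWithin (k + 1 + (k+1+1) - (k+1+1)) (convPow M (k+1+1)) (Set.Ici 0) 0 = _
      rw [show k + 1 + (k+1+1) - (k+1+1) = k+1 from by omega]
      rw [hM, iter_convPow α lam (k+2) (k+1) Set.self_mem_Ici]
      rw [mul_zero, Real.exp_zero, mul_one]
      rw [Dl_pow_apply, Polynomial.eval_finset_sum, Finset.sum_eq_single (k+1)]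
      · show Polynomial.eval 0 ((lam ^ (k+1-(k+1)) * ((k+1).choose (k+1) : ℝ)) •
          (Polynomial.derivative^[k+1] (pj α (k+2)))) = _
        rw [Nat.sub_self, pow_zero, Nat.choose_self, Nat.cast_one, one_mul, one_smul]
        show Polynomial.eval 0 (Polynomial.derivative^[k+1]
          (Polynomial.C (α^(k+2) / (Nat.factorial (k+1) : ℝ)) * Polynomial.X^(k+1))) = _
        rw [Polynomial.iterate_derivative_C_mul, Polynomial.iterate_derivative_X_pow_eq_C_mul]
        rw [Nat.sub_self, pow_zero, Nat.descFactorial_self]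
        rw [Polynomial.eval_mul, Polynomial.eval_mul, Polynomial.eval_C, Polynomial.eval_C,
          Polynomial.eval_one, mul_one]
        field_simp
      · intro i hi hne
        have hik : i ≤ k := by rw [Finset.mem_range] at hi; omega
        rw [Polynomial.eval_smul]
        show _ • Polynomial.eval 0 (Polynomial.derivative^[i]
          (Polynomial.C (α^(k+2) / (Nat.factorial (k+1) : ℝ)) * Polynomial.X^(k+1))) = 0
        rw [Polynomial.iterate_derivative_C_mul, Polynomial.iterate_derivative_X_pow_eq_C_mul]
        rw [Polynomial.eval_mul, Polynomial.eval_mul, Polynomial.eval_pow, Polynomial.eval_X]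
        rw [zero_pow (show k+1-i ≠ 0 from by omega)]
        simp
      · intro h
        exact absurd (Finset.self_mem_range_succ (k+1)) h
    have hRcoeff : R.coeff (k+1+1) = α^(k+2) / (Nat.factorial (k+1+1) : ℝ) := by
      rw [hRdef, Polynomial.coeff_add, Polynomial.coeff_C, if_neg (by omega), zero_add,
        Polynomial.coeff_C_mul, Polynomial.finset_sum_coeff]
      rw [Finset.sum_eq_single (k+1+1)]
      · rw [Polynomial.finset_sum_coeff, Finset.sum_eq_single (k+1+1)]
        · rw [if_pos (by omega), Polynomial.coeff_C_mul, Polynomial.coeff_X_pow, if_pos rfl,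
            mul_one]
          rw [show k+1+(k+1+1)-(k+1+1) = k+1 from by omega, Nat.choose_self, Nat.cast_one,
            one_mul, hD2]
          have h11 : ((-1:ℝ))^(k+1+1) * ((-1:ℝ))^(k+1+1) = 1 := by
            rw [← pow_add]
            exact Even.neg_one_pow ⟨k+1+1, by ring⟩
          calc ((-1:ℝ))^(k+1+1) * (α^(k+2) * ((-1:ℝ)^(k+1+1) / ((k+1+1).factorial : ℝ)))
              = (((-1:ℝ))^(k+1+1) * ((-1:ℝ))^(k+1+1)) * (α^(k+2) / ((k+1+1).factorial : ℝ)) := by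
                ring
            _ = α^(k+2) / ((k+1+1).factorial : ℝ) := by rw [h11, one_mul]
        · intro m hm hne
          split_ifs
          · rw [Polynomial.coeff_C_mul, Polynomial.coeff_X_pow,
              if_neg (fun h => hne h.symm), mul_zero]
          · exact Polynomial.coeff_zero _
        · intro h
          exact absurd (Finset.mem_Icc.mpr ⟨by omega, le_rfl⟩) h
      · intro j hj hne
        have hjk : j ≤ k+1 := by
          rw [Finset.mem_Icc] at hj; omega
        rw [Polynomial.finset_sum_coeff]
        refine Finset.sum_eq_zero fun m hm => ?_
        have hmk : m ≤ k+1 := le_trans (Finset.mem_Icc.mp hm).2 hjk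
        split_ifs
        · rw [Polynomial.coeff_C_mul, Polynomial.coeff_X_pow,
            if_neg (show ¬ (k+1+1 = m) from by omega), mul_zero]
        · exact Polynomial.coeff_zero _
      · intro h
        exact absurd (Finset.mem_Icc.mpr ⟨by omega, le_rfl⟩) h
    have hRne : R ≠ 0 := by
      intro h
      rw [h, Polynomial.coeff_zero] at hRcoeff
      exact (div_ne_zero (pow_ne_zero _ hα)
        (Nat.cast_ne_zero.mpr (Nat.factorial_ne_zero _))) hRcoeff.symm
    refine measure_mono_null (fun t ht => ?_)
      ((Polynomial.finite_setOf_isRoot hRne).measure_zero _)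
    obtain ⟨ht0, hz⟩ := ht
    show Polynomial.eval t R = 0
    rw [← hReval t]
    exact hz
end
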